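/- B-stability (monotonicity) of the multi-adaptive discontinuous Galerkin method: Let N ≥ 1, T > 0 and let f : ℝ^N × [0,T] → ℝ^N be continuous and monotone, i.e. (f(u,t) − f(v,t), u − v) ≤ 0 for all u, v ∈ ℝ^N and t ∈ [0,T]. Let U and V be mdG(q) solutions of u̇ = f(u,·) on the same partitions {t_{ij}} with the same degrees q_{ij}, with initial data U(0⁻), V(0⁻) ∈ ℝ^N. Then at every synchronized time-level t̄ ∈ (0,T] (i.e. every t̄ such that for each i there is some j with t̄ = t_{ij}) one has ‖U(t̄⁻) − V(t̄⁻)‖ ≤ ‖U(0⁻) − V(0⁻)‖, where t̄⁻ denotes the left limit and ‖·‖ is the Euclidean norm on ℝ^N. -/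

import Mathlib

open MeasureTheory intervalIntegral Set
open scoped RealInnerProductSpace

private lemma mdG_abs_le_norm {n : ℕ} (x : EuclideanSpace ℝ (Fin n)) (i : Fin n) :
    |x i| ≤ ‖x‖ := by
  rw [EuclideanSpace.norm_eq]
  have h1 : |x i| = Real.sqrt (‖x i‖ ^ 2) := by
    rw [Real.sqrt_sq_eq_abs, Real.norm_eq_abs, abs_abs]
  rw [h1]
  apply Real.sqrt_le_sqrt
  exact Finset.single_le_sum (f := fun j => ‖x j‖ ^ 2) (fun j _ => sq_nonneg _)
    (Finset.mem_univ i)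

private lemma mdG_cover (ti : ℕ → ℝ) (s : ℝ) (hs : 0 < s) (ht0 : ti 0 = 0) :
    ∀ n, s ≤ ti n → ∃ j < n, s ∈ Set.Ioc (ti j) (ti (j + 1)) := by
  intro n
  induction n with
  | zero => intro h; rw [ht0] at h; linarith
  | succ n ih =>
    intro h
    by_cases h' : s ≤ ti n
    · obtain ⟨j, hj, hmem⟩ := ih h'
      exact ⟨j, Nat.lt_succ_of_lt hj, hmem⟩
    · exact ⟨n, Nat.lt_succ_self n, ⟨lt_of_not_ge h', h⟩⟩

private lemma mdG_mono (Mi : ℕ) (ti : ℕ → ℝ) (h : ∀ j < Mi, ti j < ti (j + 1)) :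
    ∀ j k, j ≤ k → k ≤ Mi → ti j ≤ ti k := by
  intro j k
  induction k with
  | zero => intro hjk _; rw [Nat.le_zero.mp hjk]
  | succ k ih =>
    intro hjk hk
    rcases Nat.lt_or_ge j (k + 1) with h1 | h2
    · exact le_trans (ih (by omega) (by omega)) (h k (by omega)).le
    · rw [le_antisymm hjk h2]

private lemma mdG_surrogate (N : ℕ) (T : ℝ) (hT : 0 < T)
    (M : Fin N → ℕ)
    (t : Fin N → ℕ → ℝ)
    (ht0 : ∀ i, t i 0 = 0) (htT : ∀ i, t i (M i) = T)
    (htmono : ∀ i, ∀ j < M i, t i j < t i (j + 1))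
    (U : ℝ → EuclideanSpace ℝ (Fin N))
    (pU : Fin N → ℕ → Polynomial ℝ)
    (hUval : ∀ i, ∀ j < M i, ∀ s ∈ Set.Ioc (t i j) (t i (j + 1)), U s i = (pU i j).eval s) :
    ∃ (G : ℝ → EuclideanSpace ℝ (Fin N)) (R : ℝ), Measurable G ∧ 0 ≤ R ∧
      (∀ s, ‖G s‖ ≤ R) ∧ ∀ s ∈ Set.Ioc (0 : ℝ) T, G s = U s := by
  have hB : ∀ i j, ∃ C, 0 ≤ C ∧ ∀ s ∈ Set.Icc (0 : ℝ) T, |(pU i j).eval s| ≤ C := by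
    intro i j
    obtain ⟨x, hx, hmax⟩ := isCompact_Icc.exists_isMaxOn (α := ℝ) ⟨0, le_refl 0, hT.le⟩
      (((pU i j).continuous.abs).continuousOn)
    exact ⟨|(pU i j).eval x|, abs_nonneg _, fun s hs => hmax hs⟩
  choose B hB0 hBle using hB
  set G : ℝ → EuclideanSpace ℝ (Fin N) := fun s =>
    WithLp.toLp 2 (fun i => ∑ j ∈ Finset.range (M i),
      if s ∈ Set.Ioc (t i j) (t i (j + 1)) then (pU i j).eval s else 0) with hG
  have hsub : ∀ i, ∀ j < M i, Set.Ioc (t i j) (t i (j + 1)) ⊆ Set.Icc (0 : ℝ) T := by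
    intro i j hj s hs
    constructor
    · have h0 : t i 0 ≤ t i j := mdG_mono (M i) (t i) (htmono i) 0 j (Nat.zero_le _) (le_of_lt hj)
      rw [ht0 i] at h0; linarith [hs.1]
    · have hT' : t i (j + 1) ≤ t i (M i) :=
        mdG_mono (M i) (t i) (htmono i) (j + 1) (M i) hj (le_refl _)
      rw [htT i] at hT'; linarith [hs.2]
  have hGm : Measurable G := by
    apply (WithLp.measurable_toLp 2 (Fin N → ℝ)).comp
    apply measurable_pi_lambda
    intro i
    apply Finset.measurable_sum
    intro j _
    exact Measurable.ite measurableSet_Ioc (pU i j).continuous.measurable measurable_const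
  have hGcomp : ∀ s i, |G s i| ≤ ∑ j ∈ Finset.range (M i), B i j := by
    intro s i
    show |∑ j ∈ Finset.range (M i),
      if s ∈ Set.Ioc (t i j) (t i (j + 1)) then (pU i j).eval s else 0| ≤ _
    refine (Finset.abs_sum_le_sum_abs _ _).trans (Finset.sum_le_sum ?_)
    intro j hj
    rw [Finset.mem_range] at hj
    split_ifs with h
    · exact hBle i j s (hsub i j hj h)
    · simpa using hB0 i j
  set R : ℝ := Real.sqrt (∑ i, (∑ j ∈ Finset.range (M i), B i j) ^ 2) with hR
  refine ⟨G, R, hGm, Real.sqrt_nonneg _, ?_, ?_⟩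
  · intro s
    rw [EuclideanSpace.norm_eq, hR]
    apply Real.sqrt_le_sqrt
    apply Finset.sum_le_sum
    intro i _
    rw [Real.norm_eq_abs]
    exact pow_le_pow_left₀ (abs_nonneg _) (hGcomp s i) 2
  · intro s hs
    ext i
    obtain ⟨j0, hj0M, hmem⟩ := mdG_cover (t i) s hs.1 (ht0 i) (M i) (by rw [htT i]; exact hs.2)
    show (∑ j ∈ Finset.range (M i),
      if s ∈ Set.Ioc (t i j) (t i (j + 1)) then (pU i j).eval s else 0) = U s i
    rw [hUval i j0 hj0M s hmem]
    rw [Finset.sum_eq_single j0]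
    · rw [if_pos hmem]
    · intro b hb hbne
      rw [Finset.mem_range] at hb
      rw [if_neg]
      intro hmem'
      rcases Nat.lt_or_ge b j0 with h1 | h2
      · have h3 : t i (b + 1) ≤ t i j0 :=
          mdG_mono (M i) (t i) (htmono i) (b + 1) j0 h1 hj0M.le
        have := hmem'.2.trans h3
        linarith [hmem.1]
      · have hb2 : j0 + 1 ≤ b := by omega
        have h3 : t i (j0 + 1) ≤ t i b :=
          mdG_mono (M i) (t i) (htmono i) (j0 + 1) b hb2 hb.le
        have := hmem.2.trans h3
        linarith [hmem'.1]
    · intro h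
      exact absurd (Finset.mem_range.mpr hj0M) h

/-- B-stability (monotonicity) of the multi-adaptive discontinuous Galerkin method mdG(q):
for a monotone right-hand side `f`, two mdG(q) solutions `U`, `V` of `u̇ = f(u,·)` on the same
partitions with the same degrees satisfy `‖U(t̄⁻) − V(t̄⁻)‖ ≤ ‖U(0⁻) − V(0⁻)‖` at every
synchronized time-level `t̄`.  Each component `U_i` is given on `I_{ij} = (t_{i,j-1}, t_{ij}]`
by the polynomial `pU i j`, so that `U(t̄⁻) = U(t̄)` and left/right limits at the nodes are
polynomial evaluations. -/
theorem mdG_B_stability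
    (N : ℕ) (hN : 1 ≤ N) (T : ℝ) (hT : 0 < T)
    (f : EuclideanSpace ℝ (Fin N) → ℝ → EuclideanSpace ℝ (Fin N))
    (hfc : Continuous fun p : EuclideanSpace ℝ (Fin N) × ℝ => f p.1 p.2)
    (hmono : ∀ (x y : EuclideanSpace ℝ (Fin N)), ∀ s ∈ Set.Icc (0:ℝ) T,
      ⟪f x s - f y s, x - y⟫ ≤ (0 : ℝ))
    -- common partitions and degrees
    (M : Fin N → ℕ) (hM : ∀ i, 1 ≤ M i)
    (t : Fin N → ℕ → ℝ)
    (ht0 : ∀ i, t i 0 = 0) (htT : ∀ i, t i (M i) = T)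
    (htmono : ∀ i, ∀ j < M i, t i j < t i (j + 1))
    (q : Fin N → ℕ → ℕ)
    -- the two mdG(q) solutions with initial data `Ua = U(0⁻)`, `Va = V(0⁻)`
    (U V : ℝ → EuclideanSpace ℝ (Fin N))
    (Ua Va : EuclideanSpace ℝ (Fin N))
    (pU pV : Fin N → ℕ → Polynomial ℝ)
    (hpUdeg : ∀ i, ∀ j < M i, (pU i j).natDegree ≤ q i j)
    (hpVdeg : ∀ i, ∀ j < M i, (pV i j).natDegree ≤ q i j)
    (hUval : ∀ i, ∀ j < M i, ∀ s ∈ Set.Ioc (t i j) (t i (j + 1)), U s i = (pU i j).eval s)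
    (hVval : ∀ i, ∀ j < M i, ∀ s ∈ Set.Ioc (t i j) (t i (j + 1)), V s i = (pV i j).eval s)
    -- the local mdG(q) variational equations
    (hGalU : ∀ i, ∀ j < M i, ∀ v : Polynomial ℝ, v.natDegree ≤ q i j →
      ((pU i j).eval (t i j)
          - (if j = 0 then Ua i else (pU i (j - 1)).eval (t i j))) * v.eval (t i j)
        + (∫ s in (t i j)..(t i (j + 1)),
            ((pU i j).derivative.eval s - f (U s) s i) * v.eval s) = 0)
    (hGalV : ∀ i, ∀ j < M i, ∀ v : Polynomial ℝ, v.natDegree ≤ q i j →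
      ((pV i j).eval (t i j)
          - (if j = 0 then Va i else (pV i (j - 1)).eval (t i j))) * v.eval (t i j)
        + (∫ s in (t i j)..(t i (j + 1)),
            ((pV i j).derivative.eval s - f (V s) s i) * v.eval s) = 0)
    -- a synchronized time-level `t̄ ∈ (0,T]`
    (tbar : ℝ) (htbar : tbar ∈ Set.Ioc 0 T)
    (hsync : ∀ i, ∃ j, 1 ≤ j ∧ j ≤ M i ∧ tbar = t i j) :
    ‖U tbar - V tbar‖ ≤ ‖Ua - Va‖ := by
  classical
  choose J hJ1 hJM hJt using hsync
  obtain ⟨GU, RU, hGUm, hRU0, hGUb, hGUe⟩ :=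
    mdG_surrogate N T hT M t ht0 htT htmono U pU hUval
  obtain ⟨GV, RV, hGVm, hRV0, hGVb, hGVe⟩ :=
    mdG_surrogate N T hT M t ht0 htT htmono V pV hVval
  -- the clamp to [0, T]
  set τ : ℝ → ℝ := fun s => max 0 (min s T) with hτdef
  have hτm : Measurable τ := by
    rw [hτdef]
    exact measurable_const.max (measurable_id.min measurable_const)
  have hτmem : ∀ s, τ s ∈ Set.Icc (0:ℝ) T := by
    intro s
    exact ⟨le_max_left _ _, max_le hT.le (min_le_right s T)⟩
  have hτid : ∀ s ∈ Set.Ioc (0:ℝ) T, τ s = s := by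
    intro s hs
    rw [hτdef]
    simp only [min_eq_left hs.2, max_eq_right hs.1.le]
  -- uniform bound for `f` on a compact set
  have hRR0 : (0:ℝ) ≤ max RU RV := le_trans hRU0 (le_max_left _ _)
  obtain ⟨p0, hp0, hCf⟩ := ((isCompact_closedBall (0 : EuclideanSpace ℝ (Fin N)) (max RU RV)).prod
      isCompact_Icc).exists_isMaxOn
      ⟨((0 : EuclideanSpace ℝ (Fin N)), (0:ℝ)),
        Set.mem_prod.mpr ⟨Metric.mem_closedBall_self hRR0, ⟨le_refl 0, hT.le⟩⟩⟩
      (hfc.norm.continuousOn)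
  set Cf : ℝ := ‖f p0.1 p0.2‖ with hCfdef
  have hCf0 : (0:ℝ) ≤ Cf := norm_nonneg _
  have hCf' : ∀ p ∈ Metric.closedBall (0 : EuclideanSpace ℝ (Fin N)) (max RU RV) ×ˢ
      Set.Icc (0:ℝ) T, ‖f p.1 p.2‖ ≤ Cf := isMaxOn_iff.mp hCf
  have hfbU : ∀ s, ‖f (GU s) (τ s)‖ ≤ Cf := by
    intro s
    have hmem : (GU s, τ s) ∈
        Metric.closedBall (0 : EuclideanSpace ℝ (Fin N)) (max RU RV) ×ˢ Set.Icc (0:ℝ) T := by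
      constructor
      · rw [Metric.mem_closedBall, dist_zero_right]
        exact le_trans (hGUb s) (le_max_left RU RV)
      · exact hτmem s
    have h2 := hCf' (GU s, τ s) hmem
    exact h2
  have hfbV : ∀ s, ‖f (GV s) (τ s)‖ ≤ Cf := by
    intro s
    have hmem : (GV s, τ s) ∈
        Metric.closedBall (0 : EuclideanSpace ℝ (Fin N)) (max RU RV) ×ˢ Set.Icc (0:ℝ) T := by
      constructor
      · rw [Metric.mem_closedBall, dist_zero_right]
        exact le_trans (hGVb s) (le_max_right RU RV)
      · exact hτmem s
    have h2 := hCf' (GV s, τ s) hmem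
    exact h2
  -- general integrability criterion
  have intgen : ∀ (φ ψ : ℝ → ℝ) (C : ℝ), Measurable ψ → (∀ s, |ψ s| ≤ C) →
      (∀ s ∈ Set.Ioc (0:ℝ) T, φ s = ψ s) →
      ∀ a b : ℝ, 0 ≤ a → a ≤ b → b ≤ T → IntervalIntegrable φ volume a b := by
    intro φ ψ C hm hb heq a b h0a hab hbT
    rw [intervalIntegrable_iff_integrableOn_Ioc_of_le hab]
    have hψ : IntegrableOn ψ (Set.Ioc a b) volume := by
      apply Integrable.mono' ((integrableOn_const_iff (C := C)).mpr (Or.inr measure_Ioc_lt_top))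
      · exact hm.aestronglyMeasurable
      · exact Filter.Eventually.of_forall fun s => by simpa using hb s
    exact hψ.congr_fun
      (fun s hs => (heq s ⟨lt_of_le_of_lt h0a hs.1, hs.2.trans hbT⟩).symm) measurableSet_Ioc
  -- bounds of clamped polynomials
  have polyB : ∀ P : Polynomial ℝ, ∃ C, 0 ≤ C ∧ ∀ s, |P.eval (τ s)| ≤ C := by
    intro P
    obtain ⟨x, hx, hmax⟩ := isCompact_Icc.exists_isMaxOn (α := ℝ) ⟨0, le_refl 0, hT.le⟩
      ((P.continuous.abs).continuousOn)
    exact ⟨|P.eval x|, abs_nonneg _, fun s => hmax (hτmem s)⟩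
  -- measurability of the surrogate components
  have hsFUm : ∀ i : Fin N, Measurable fun s => f (GU s) (τ s) i := fun i =>
    (measurable_pi_apply i).comp ((WithLp.measurable_ofLp 2 _).comp (hfc.measurable.comp (hGUm.prodMk hτm)))
  have hsFVm : ∀ i : Fin N, Measurable fun s => f (GV s) (τ s) i := fun i =>
    (measurable_pi_apply i).comp ((WithLp.measurable_ofLp 2 _).comp (hfc.measurable.comp (hGVm.prodMk hτm)))
  -- integrability of `f(U)·P`, `f(V)·P`
  have intFUP : ∀ (i : Fin N) (P : Polynomial ℝ) (a b : ℝ), 0 ≤ a → a ≤ b → b ≤ T →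
      IntervalIntegrable (fun s => f (U s) s i * P.eval s) volume a b := by
    intro i P a b h0a hab hbT
    obtain ⟨CP, hCP0, hCP⟩ := polyB P
    refine intgen _ (fun s => f (GU s) (τ s) i * P.eval (τ s)) (Cf * CP)
      ((hsFUm i).mul (P.continuous.measurable.comp hτm)) ?_ ?_ a b h0a hab hbT
    · intro s
      rw [abs_mul]
      exact mul_le_mul ((mdG_abs_le_norm _ i).trans (hfbU s)) (hCP s) (abs_nonneg _) hCf0
    · intro s hs
      simp only [hGUe s hs, hτid s hs]
  have intFVP : ∀ (i : Fin N) (P : Polynomial ℝ) (a b : ℝ), 0 ≤ a → a ≤ b → b ≤ T →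
      IntervalIntegrable (fun s => f (V s) s i * P.eval s) volume a b := by
    intro i P a b h0a hab hbT
    obtain ⟨CP, hCP0, hCP⟩ := polyB P
    refine intgen _ (fun s => f (GV s) (τ s) i * P.eval (τ s)) (Cf * CP)
      ((hsFVm i).mul (P.continuous.measurable.comp hτm)) ?_ ?_ a b h0a hab hbT
    · intro s
      rw [abs_mul]
      exact mul_le_mul ((mdG_abs_le_norm _ i).trans (hfbV s)) (hCP s) (abs_nonneg _) hCf0
    · intro s hs
      simp only [hGVe s hs, hτid s hs]
  -- the monotonicity integrand
  set dfw : Fin N → ℝ → ℝ :=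
    fun i s => (f (U s) s i - f (V s) s i) * (U s i - V s i) with hdfwdef
  have intdfw : ∀ (i : Fin N) (a b : ℝ), 0 ≤ a → a ≤ b → b ≤ T →
      IntervalIntegrable (dfw i) volume a b := by
    intro i a b h0a hab hbT
    refine intgen _ (fun s => (f (GU s) (τ s) i - f (GV s) (τ s) i) * (GU s i - GV s i))
      ((Cf + Cf) * (RU + RV))
      (((hsFUm i).sub (hsFVm i)).mul
        (((measurable_pi_apply i).comp ((WithLp.measurable_ofLp 2 _).comp hGUm)).sub ((measurable_pi_apply i).comp ((WithLp.measurable_ofLp 2 _).comp hGVm))))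
      ?_ ?_ a b h0a hab hbT
    · intro s
      rw [abs_mul]
      have h1 : |f (GU s) (τ s) i - f (GV s) (τ s) i| ≤ Cf + Cf :=
        (abs_sub _ _).trans (add_le_add ((mdG_abs_le_norm _ i).trans (hfbU s))
          ((mdG_abs_le_norm _ i).trans (hfbV s)))
      have h2 : |GU s i - GV s i| ≤ RU + RV :=
        (abs_sub _ _).trans (add_le_add ((mdG_abs_le_norm _ i).trans (hGUb s))
          ((mdG_abs_le_norm _ i).trans (hGVb s)))
      exact mul_le_mul h1 h2 (abs_nonneg _) (by linarith)
    · intro s hs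
      simp only [hdfwdef, hGUe s hs, hGVe s hs, hτid s hs]
  -- partition points lie in [0, T]
  have htnn : ∀ i : Fin N, ∀ k, k ≤ M i → 0 ≤ t i k ∧ t i k ≤ T := by
    intro i k hk
    constructor
    · have h := mdG_mono (M i) (t i) (htmono i) 0 k (Nat.zero_le _) hk
      rw [ht0 i] at h; exact h
    · have h := mdG_mono (M i) (t i) (htmono i) k (M i) hk le_rfl
      rw [htT i] at h; exact h
  -- the key local energy inequality
  have key : ∀ i : Fin N, ∀ j < M i,
      ((pU i j - pV i j).eval (t i (j+1)))^2 ≤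
        (if j = 0 then Ua i - Va i else (pU i (j-1) - pV i (j-1)).eval (t i j))^2
        + 2 * ∫ s in (t i j)..(t i (j+1)), dfw i s := by
    intro i j hj
    have h0a : 0 ≤ t i j := (htnn i j hj.le).1
    have hab : t i j ≤ t i (j+1) := (htmono i j hj).le
    have hbT : t i (j+1) ≤ T := (htnn i (j+1) hj).2
    have hdeg : (pU i j - pV i j).natDegree ≤ q i j :=
      (Polynomial.natDegree_sub_le _ _).trans (max_le (hpUdeg i j hj) (hpVdeg i j hj))
    have hU := hGalU i j hj (pU i j - pV i j) hdeg
    have hV := hGalV i j hj (pU i j - pV i j) hdeg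
    have hPUc : IntervalIntegrable
        (fun s => (pU i j).derivative.eval s * (pU i j - pV i j).eval s)
        volume (t i j) (t i (j+1)) :=
      ((pU i j).derivative.continuous.mul (pU i j - pV i j).continuous).intervalIntegrable _ _
    have hPVc : IntervalIntegrable
        (fun s => (pV i j).derivative.eval s * (pU i j - pV i j).eval s)
        volume (t i j) (t i (j+1)) :=
      ((pV i j).derivative.continuous.mul (pU i j - pV i j).continuous).intervalIntegrable _ _
    have hFU := intFUP i (pU i j - pV i j) (t i j) (t i (j+1)) h0a hab hbT
    have hFV := intFVP i (pU i j - pV i j) (t i j) (t i (j+1)) h0a hab hbT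
    simp only [sub_mul] at hU hV
    rw [intervalIntegral.integral_sub hPUc hFU] at hU
    rw [intervalIntegral.integral_sub hPVc hFV] at hV
    -- FTC for the polynomial part
    have hftc : (∫ s in (t i j)..(t i (j+1)),
          (pU i j).derivative.eval s * (pU i j - pV i j).eval s)
        - (∫ s in (t i j)..(t i (j+1)),
          (pV i j).derivative.eval s * (pU i j - pV i j).eval s)
        = ((pU i j - pV i j).eval (t i (j+1)) ^ 2
            - (pU i j - pV i j).eval (t i j) ^ 2) / 2 := by
      rw [← intervalIntegral.integral_sub hPUc hPVc]
      have heq : (fun s => (pU i j).derivative.eval s * (pU i j - pV i j).eval s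
          - (pV i j).derivative.eval s * (pU i j - pV i j).eval s)
          = fun s => (pU i j - pV i j).derivative.eval s * (pU i j - pV i j).eval s := by
        funext s
        simp only [Polynomial.derivative_sub, Polynomial.eval_sub]
        ring
      rw [heq]
      have hderiv : ∀ x ∈ Set.uIcc (t i j) (t i (j+1)),
          HasDerivAt (fun y => (pU i j - pV i j).eval y ^ 2 / 2)
          ((pU i j - pV i j).derivative.eval x * (pU i j - pV i j).eval x) x := by
        intro x _
        have h := (((pU i j - pV i j).hasDerivAt x).pow 2).div_const 2
        refine h.congr_deriv ?_
        norm_num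
        ring
      rw [intervalIntegral.integral_eq_sub_of_hasDerivAt hderiv
        (((pU i j - pV i j).derivative.continuous.mul
          (pU i j - pV i j).continuous).intervalIntegrable _ _)]
      ring
    -- identify the difference of the f-integrals with the dfw-integral
    have hDI : (∫ s in (t i j)..(t i (j+1)), f (U s) s i * (pU i j - pV i j).eval s)
        - (∫ s in (t i j)..(t i (j+1)), f (V s) s i * (pU i j - pV i j).eval s)
        = ∫ s in (t i j)..(t i (j+1)), dfw i s := by
      rw [← intervalIntegral.integral_sub hFU hFV,
        intervalIntegral.integral_of_le hab, intervalIntegral.integral_of_le hab]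
      apply setIntegral_congr_fun measurableSet_Ioc
      intro s hs
      simp only [hdfwdef]
      rw [hUval i j hj s hs, hVval i j hj s hs]
      simp only [Polynomial.eval_sub]
      ring
    have hA : (pU i j - pV i j).eval (t i j)
        = (pU i j).eval (t i j) - (pV i j).eval (t i j) := Polynomial.eval_sub _ _ _
    have hAW : (pU i j).eval (t i j) * (pU i j - pV i j).eval (t i j)
        - (pV i j).eval (t i j) * (pU i j - pV i j).eval (t i j)
        = (pU i j - pV i j).eval (t i j) ^ 2 := by rw [hA]; ring
    by_cases hj0 : j = 0
    · simp only [if_pos hj0] at hU hV ⊢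
      have hBW : Ua i * (pU i j - pV i j).eval (t i j)
          - Va i * (pU i j - pV i j).eval (t i j)
          = (Ua i - Va i) * (pU i j - pV i j).eval (t i j) := by ring
      nlinarith [sq_nonneg ((pU i j - pV i j).eval (t i j) - (Ua i - Va i)), hU, hV, hftc,
        hDI, hAW, hBW]
    · simp only [if_neg hj0] at hU hV ⊢
      have hB : (pU i (j-1) - pV i (j-1)).eval (t i j)
          = (pU i (j-1)).eval (t i j) - (pV i (j-1)).eval (t i j) := Polynomial.eval_sub _ _ _
      have hBW : (pU i (j-1)).eval (t i j) * (pU i j - pV i j).eval (t i j)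
          - (pV i (j-1)).eval (t i j) * (pU i j - pV i j).eval (t i j)
          = (pU i (j-1) - pV i (j-1)).eval (t i j) * (pU i j - pV i j).eval (t i j) := by
        rw [hB]; ring
      nlinarith [sq_nonneg ((pU i j - pV i j).eval (t i j)
        - (pU i (j-1) - pV i (j-1)).eval (t i j)), hU, hV, hftc, hDI, hAW, hBW]
  -- the discrete energy chain
  have chain : ∀ (i : Fin N) (n : ℕ), 1 ≤ n → n ≤ M i →
      ((pU i (n-1) - pV i (n-1)).eval (t i n))^2 ≤ (Ua i - Va i)^2
        + 2 * ∑ j ∈ Finset.range n, ∫ s in (t i j)..(t i (j+1)), dfw i s := by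
    intro i n
    induction n with
    | zero => intro h; omega
    | succ n ih =>
      intro _ hn1
      rcases Nat.eq_zero_or_pos n with rfl | hn
      · have h := key i 0 (by omega)
        simpa using h
      · have h1 := key i n (by omega)
        rw [if_neg (by omega)] at h1
        have h2 := ih (by omega) (by omega)
        rw [Finset.sum_range_succ]
        simp only [Nat.add_sub_cancel]
        linarith
  -- per-component final inequality
  have main_i : ∀ i : Fin N,
      (U tbar i - V tbar i)^2 ≤ (Ua i - Va i)^2 + 2 * ∫ s in (0:ℝ)..tbar, dfw i s := by
    intro i
    have hC := chain i (J i) (hJ1 i) (hJM i)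
    have hintk : ∀ k < J i, IntervalIntegrable (dfw i) volume (t i k) (t i (k+1)) := by
      intro k hk
      have hkM : k < M i := lt_of_lt_of_le hk (hJM i)
      exact intdfw i (t i k) (t i (k+1)) (htnn i k hkM.le).1 (htmono i k hkM).le
        (htnn i (k+1) hkM).2
    have hadj := intervalIntegral.sum_integral_adjacent_intervals hintk
    rw [ht0 i, ← hJt i] at hadj
    rw [hadj] at hC
    have hsucc : J i - 1 + 1 = J i := Nat.succ_pred_eq_of_pos (hJ1 i)
    have hjm : J i - 1 < M i := by
      have h1 := hJ1 i; have h2 := hJM i; omega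
    have hmemt : tbar ∈ Set.Ioc (t i (J i - 1)) (t i (J i - 1 + 1)) := by
      rw [hsucc, ← hJt i]
      constructor
      · have h := htmono i (J i - 1) hjm
        rw [hsucc] at h
        rw [hJt i]
        exact h
      · exact le_refl _
    have hU' : U tbar i = (pU i (J i - 1)).eval tbar := hUval i _ hjm tbar hmemt
    have hV' : V tbar i = (pV i (J i - 1)).eval tbar := hVval i _ hjm tbar hmemt
    rw [hU', hV']
    have hev : (pU i (J i - 1) - pV i (J i - 1)).eval (t i (J i))
        = (pU i (J i - 1)).eval tbar - (pV i (J i - 1)).eval tbar := by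
      rw [← hJt i, Polynomial.eval_sub]
    rw [hev] at hC
    exact hC
  -- sum the component inequalities
  have hnormsq : ∀ (z : EuclideanSpace ℝ (Fin N)), ‖z‖^2 = ∑ i, (z i)^2 := by
    intro z
    rw [EuclideanSpace.norm_eq, Real.sq_sqrt (Finset.sum_nonneg fun i _ => sq_nonneg _)]
    exact Finset.sum_congr rfl fun i _ => by rw [Real.norm_eq_abs, sq_abs]
  have hsum : ∑ i, (U tbar i - V tbar i)^2 ≤ ∑ i, (Ua i - Va i)^2
      + 2 * ∑ i, ∫ s in (0:ℝ)..tbar, dfw i s := by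
    calc ∑ i, (U tbar i - V tbar i)^2
        ≤ ∑ i, ((Ua i - Va i)^2 + 2 * ∫ s in (0:ℝ)..tbar, dfw i s) :=
          Finset.sum_le_sum fun i _ => main_i i
      _ = _ := by rw [Finset.sum_add_distrib, Finset.mul_sum]
  have hint0 : ∑ i, ∫ s in (0:ℝ)..tbar, dfw i s ≤ 0 := by
    rw [← intervalIntegral.integral_finset_sum
      (fun i _ => intdfw i 0 tbar le_rfl htbar.1.le htbar.2)]
    rw [intervalIntegral.integral_of_le htbar.1.le]
    apply setIntegral_nonpos measurableSet_Ioc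
    intro s hs
    have hm := hmono (U s) (V s) s ⟨hs.1.le, hs.2.trans htbar.2⟩
    refine le_trans (le_of_eq ?_) hm
    rw [PiLp.inner_apply]
    apply Finset.sum_congr rfl
    intro i _
    simp only [hdfwdef, PiLp.sub_apply, RCLike.inner_apply, conj_trivial]
    ring
  have hfin : ‖U tbar - V tbar‖^2 ≤ ‖Ua - Va‖^2 := by
    rw [hnormsq (U tbar - V tbar), hnormsq (Ua - Va)]
    simp only [PiLp.sub_apply]
    linarith
  calc ‖U tbar - V tbar‖ = Real.sqrt (‖U tbar - V tbar‖^2) :=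
        (Real.sqrt_sq (norm_nonneg _)).symm
    _ ≤ Real.sqrt (‖Ua - Va‖^2) := Real.sqrt_le_sqrt hfin
    _ = ‖Ua - Va‖ := Real.sqrt_sq (norm_nonneg _)
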